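/- For every integer n ≥ 1, Hermite's constant γ_n satisfies γ_n < n/8.5 + 2, assuming Blichfeldt's bound γ_n ≤ (2/π)·Γ(2 + n/2)^{2/n}. -/

import Mathlib

open Real

/-- Padé-type bound: `log (1+t) ≥ 2t/(2+t)` for `0 ≤ t ≤ 2`. -/
lemma log_ge_pade {t : ℝ} (ht0 : 0 ≤ t) (ht2 : t ≤ 2) :
    2 * t / (2 + t) ≤ Real.log (1 + t) := by
  have h2t : (0:ℝ) < 2 + t := by linarith
  set y := 2 * t / (2 + t) with hy
  have hy0 : 0 ≤ y := by positivity
  have hy1 : y ≤ 1 := by rw [hy, div_le_one h2t]; linarith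
  have hb := Real.exp_bound (x := y) (by rw [abs_of_nonneg hy0]; exact hy1) (n := 3) (by norm_num)
  have hsum : ∑ m ∈ Finset.range 3, y ^ m / (Nat.factorial m : ℝ) = 1 + y + y ^ 2 / 2 := by
    simp [Finset.sum_range_succ, Nat.factorial]
  rw [hsum, abs_of_nonneg hy0] at hb
  have hexp : Real.exp y ≤ 1 + y + y ^ 2 / 2 + y ^ 3 * (2/9) := by
    have := abs_le.mp hb
    have h4 : ((3:ℕ).succ : ℝ) / ((Nat.factorial 3 : ℝ) * 3) = 2/9 := by
      norm_num [Nat.factorial]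
    nlinarith [this.2]
  have hkey : Real.exp y ≤ 1 + t := by
    have hyval : y + y ^ 2 / 2 + y ^ 3 * (2/9) =
        (2*t*(2+t)^2 + 2*t^2*(2+t) + (16/9)*t^3) / (2+t)^3 := by
      rw [hy]; field_simp; ring
    have hnum : (2*t*(2+t)^2 + 2*t^2*(2+t) + (16/9)*t^3) / (2+t)^3 ≤ t := by
      rw [div_le_iff₀ (by positivity)]
      nlinarith [pow_nonneg ht0 3, ht0]
    calc Real.exp y ≤ 1 + (y + y ^ 2 / 2 + y ^ 3 * (2/9)) := by linarith [hexp]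
      _ ≤ 1 + t := by rw [hyval]; linarith [hnum]
  calc y = Real.log (Real.exp y) := (Real.log_exp y).symm
    _ ≤ Real.log (1 + t) := Real.log_le_log (Real.exp_pos y) hkey

/-- Tangent-line bound for log. -/
lemma log_tangent {x x0 L0 : ℝ} (hx : 0 < x) (hx0 : 0 < x0) (hL : Real.log x0 ≤ L0) :
    Real.log x ≤ x / x0 + L0 - 1 := by
  have h := Real.log_le_sub_one_of_pos (show (0:ℝ) < x / x0 by positivity)
  rw [Real.log_div hx.ne' hx0.ne'] at h
  linarith

/-- Certify `log x0 ≤ p/q` from `x0^q ≤ 2.7182818^p`. -/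
lemma log_le_of_pow {x0 : ℝ} {p q : ℕ} (hq : 0 < q) (hx0 : 1 ≤ x0)
    (h : x0 ^ q ≤ (2.7182818 : ℝ) ^ p) : Real.log x0 ≤ (p : ℝ) / q := by
  have he : (2.7182818 : ℝ) ^ p ≤ Real.exp 1 ^ p :=
    pow_le_pow_left₀ (by norm_num) (by linarith [Real.exp_one_gt_d9]) p
  have hx0' : x0 ≤ Real.exp ((p : ℝ) / q) := by
    have hpow : x0 ^ q ≤ Real.exp ((p : ℝ) / q) ^ q := by
      rw [← Real.exp_nat_mul]
      have hq' : (q : ℝ) * ((p : ℝ) / q) = (p : ℝ) := by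
        field_simp
      rw [hq']
      calc x0 ^ q ≤ (2.7182818 : ℝ) ^ p := h
        _ ≤ Real.exp 1 ^ p := he
        _ = Real.exp p := by rw [← Real.exp_nat_mul]; norm_num
    exact le_of_pow_le_pow_left₀ hq.ne' (Real.exp_pos _).le hpow
  calc Real.log x0 ≤ Real.log (Real.exp ((p:ℝ)/q)) :=
        Real.log_le_log (by linarith) hx0'
    _ = (p : ℝ) / q := Real.log_exp _

lemma log12 : Real.log 12 ≤ 5/2 := by
  have := log_le_of_pow (x0 := 12) (p := 5) (q := 2) (by norm_num) (by norm_num) (by norm_num)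
  norm_num at this; exact this
lemma log22 : Real.log 22 ≤ 31/10 := by
  have := log_le_of_pow (x0 := 22) (p := 31) (q := 10) (by norm_num) (by norm_num) (by norm_num)
  norm_num at this; exact this
lemma log44 : Real.log 44 ≤ 19/5 := by
  have := log_le_of_pow (x0 := 44) (p := 19) (q := 5) (by norm_num) (by norm_num) (by norm_num)
  norm_num at this; exact this
lemma log90 : Real.log 90 ≤ 9/2 := by
  have := log_le_of_pow (x0 := 90) (p := 9) (q := 2) (by norm_num) (by norm_num) (by norm_num)
  norm_num at this; exact this
lemma log181 : Real.log 181 ≤ 26/5 := by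
  have := log_le_of_pow (x0 := 181) (p := 26) (q := 5) (by norm_num) (by norm_num) (by norm_num)
  norm_num at this; exact this
lemma log362 : Real.log 362 ≤ 59/10 := by
  have := log_le_of_pow (x0 := 362) (p := 59) (q := 10) (by norm_num) (by norm_num) (by norm_num)
  norm_num at this; exact this
lemma log724 : Real.log 724 ≤ 33/5 := by
  have := log_le_of_pow (x0 := 724) (p := 33) (q := 5) (by norm_num) (by norm_num) (by norm_num)
  norm_num at this; exact this
lemma log1024 : Real.log 1024 ≤ 7 := by
  have := log_le_of_pow (x0 := 1024) (p := 35) (q := 5) (by norm_num) (by norm_num) (by norm_num)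
  norm_num at this; exact this
lemma log2dot55 : Real.log (51/20) ≤ 47/50 := by
  have := log_le_of_pow (x0 := 51/20) (p := 47) (q := 50) (by norm_num) (by norm_num) (by norm_num)
  norm_num at this; exact this

/-- Main piecewise inequality: for `x ≥ 5`,
`(3/2) log x < (23/5000) x + 5254/5000 + 26(x-2)/(4x+13)`. -/
lemma piecewise {x : ℝ} (hx : 5 ≤ x) :
    3/2 * Real.log x < 23/5000*x + 5254/5000 + 26*(x-2)/(4*x+13) := by
  have hxpos : (0:ℝ) < x := by linarith
  have hE : (0:ℝ) < 4*x+13 := by linarith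
  rcases le_or_gt x 16 with hb | hb
  · have ht := log_tangent hxpos (show (0:ℝ) < 12 by norm_num) log12
    have hq : (26/11 : ℝ) + (26/121)*(x-5) ≤ 26*(x-2)/(4*x+13) := by
      rw [le_div_iff₀ hE]
      nlinarith [mul_nonneg (by linarith : (0:ℝ) ≤ x-5) (by linarith : (0:ℝ) ≤ 16-x)]
    linarith
  rcases le_or_gt x 32 with hb2 | hb2
  · have ht := log_tangent hxpos (show (0:ℝ) < 22 by norm_num) log22
    have hq : (52/11 : ℝ) + (26/517)*(x-16) ≤ 26*(x-2)/(4*x+13) := by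
      rw [le_div_iff₀ hE]
      nlinarith [mul_nonneg (by linarith : (0:ℝ) ≤ x-16) (by linarith : (0:ℝ) ≤ 32-x)]
    linarith
  rcases le_or_gt x 64 with hb3 | hb3
  · have ht := log_tangent hxpos (show (0:ℝ) < 44 by norm_num) log44
    have hq : (260/47 : ℝ) + (182/12643)*(x-32) ≤ 26*(x-2)/(4*x+13) := by
      rw [le_div_iff₀ hE]
      nlinarith [mul_nonneg (by linarith : (0:ℝ) ≤ x-32) (by linarith : (0:ℝ) ≤ 64-x)]
    linarith
  rcases le_or_gt x 128 with hb4 | hb4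
  · have ht := log_tangent hxpos (show (0:ℝ) < 90 by norm_num) log90
    have hq : (1612/269 : ℝ) + (26/6725)*(x-64) ≤ 26*(x-2)/(4*x+13) := by
      rw [le_div_iff₀ hE]
      nlinarith [mul_nonneg (by linarith : (0:ℝ) ≤ x-64) (by linarith : (0:ℝ) ≤ 128-x)]
    linarith
  rcases le_or_gt x 256 with hb5 | hb5
  · have ht := log_tangent hxpos (show (0:ℝ) < 181 by norm_num) log181
    have hq : (156/25 : ℝ) + (26/25925)*(x-128) ≤ 26*(x-2)/(4*x+13) := by
      rw [le_div_iff₀ hE]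
      nlinarith [mul_nonneg (by linarith : (0:ℝ) ≤ x-128) (by linarith : (0:ℝ) ≤ 256-x)]
    linarith
  rcases le_or_gt x 512 with hb6 | hb6
  · have ht := log_tangent hxpos (show (0:ℝ) < 362 by norm_num) log362
    have hq : (6604/1037 : ℝ) + (182/712419)*(x-256) ≤ 26*(x-2)/(4*x+13) := by
      rw [le_div_iff₀ hE]
      nlinarith [mul_nonneg (by linarith : (0:ℝ) ≤ x-256) (by linarith : (0:ℝ) ≤ 512-x)]
    linarith
  rcases le_or_gt x 1024 with hb7 | hb7
  · have ht := log_tangent hxpos (show (0:ℝ) < 724 by norm_num) log724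
    have hq : (4420/687 : ℝ) + (182/2822883)*(x-512) ≤ 26*(x-2)/(4*x+13) := by
      rw [le_div_iff₀ hE]
      nlinarith [mul_nonneg (by linarith : (0:ℝ) ≤ x-512) (by linarith : (0:ℝ) ≤ 1024-x)]
    linarith
  · have ht := log_tangent hxpos (show (0:ℝ) < 1024 by norm_num) log1024
    have hq : (323/50 : ℝ) ≤ 26*(x-2)/(4*x+13) := by
      rw [le_div_iff₀ hE]
      nlinarith
    linarith

/-- One step of the Stirling-type bound. -/
lemma stirling_step {x : ℝ} (hx : 1 ≤ x)
    (h : Real.Gamma x ≤ 2.55 * Real.exp ((x - 1/2) * Real.log x - x)) :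
    Real.Gamma (x+1) ≤ 2.55 * Real.exp ((x + 1/2) * Real.log (x+1) - (x+1)) := by
  have hx0 : (0:ℝ) < x := by linarith
  rw [Real.Gamma_add_one hx0.ne']
  have h1 : x * Real.Gamma x ≤ 2.55 * Real.exp ((x + 1/2) * Real.log x - x) := by
    have h2 : x * (2.55 * Real.exp ((x - 1/2) * Real.log x - x))
        = 2.55 * Real.exp ((x + 1/2) * Real.log x - x) := by
      rw [show (x + 1/2) * Real.log x - x = ((x - 1/2) * Real.log x - x) + Real.log x by ring,
        Real.exp_add, Real.exp_log hx0]
      ring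
    calc x * Real.Gamma x ≤ x * (2.55 * Real.exp ((x - 1/2) * Real.log x - x)) :=
          mul_le_mul_of_nonneg_left h hx0.le
      _ = _ := h2
  have h3 : (x + 1/2) * Real.log x - x ≤ (x + 1/2) * Real.log (x+1) - (x+1) := by
    have hl : Real.log (x+1) - Real.log x = Real.log (1 + 1/x) := by
      rw [show (1 : ℝ) + 1/x = (x+1)/x by field_simp, Real.log_div (by linarith) hx0.ne']
    have hp := log_ge_pade (t := 1/x) (by positivity)
      (by rw [div_le_iff₀ hx0]; linarith)
    have hval : 2*(1/x)/(2+1/x) = 2/(2*x+1) := by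
      rw [div_eq_div_iff (by positivity) (by positivity)]
      field_simp
    rw [hval] at hp
    have hmul : 1 ≤ (x + 1/2) * (Real.log (x+1) - Real.log x) := by
      rw [hl]
      calc (1:ℝ) = (x + 1/2) * (2/(2*x+1)) := by field_simp
        _ ≤ (x + 1/2) * Real.log (1 + 1/x) :=
          mul_le_mul_of_nonneg_left hp (by linarith)
    nlinarith [hmul]
  calc x * Real.Gamma x ≤ 2.55 * Real.exp ((x + 1/2) * Real.log x - x) := h1
    _ ≤ 2.55 * Real.exp ((x + 1/2) * Real.log (x+1) - (x+1)) := by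
      have := Real.exp_le_exp.mpr h3
      nlinarith [this]

lemma exp_five_lt : Real.exp 5 ≤ (2.7182818286:ℝ)^5 := by
  rw [show (5:ℝ) = ((5:ℕ):ℝ) * 1 by norm_num, Real.exp_nat_mul]
  exact pow_le_pow_left₀ (Real.exp_pos 1).le Real.exp_one_lt_d9.le 5

lemma sqrt5_gt : (2.2360679:ℝ) ≤ Real.sqrt 5 := by
  rw [show (5:ℝ) = ((5:ℝ)) by norm_num]
  rw [Real.le_sqrt (by norm_num) (by norm_num)]
  norm_num

/-- base case A : Γ(5) ≤ 2.55 exp((5-1/2) log 5 - 5) -/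
lemma baseA : Real.Gamma 5 ≤ 2.55 * Real.exp ((5 - 1/2) * Real.log 5 - 5) := by
  have hg : Real.Gamma 5 = 24 := by
    rw [show (5:ℝ) = ((4:ℕ):ℝ)+1 by norm_num, Real.Gamma_nat_eq_factorial]
    norm_num [Nat.factorial]
  have hexp : Real.exp ((5 - 1/2) * Real.log 5 - 5) = 625 * Real.sqrt 5 / Real.exp 5 := by
    rw [show ((5:ℝ) - 1/2) * Real.log 5 - 5 = ((4:ℕ):ℝ)*Real.log 5 + (1/2)*Real.log 5 - 5 by
      push_cast; ring]
    rw [sub_eq_add_neg, Real.exp_add, Real.exp_add, Real.exp_nat_mul, Real.exp_log (by norm_num : (0:ℝ) < 5)]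
    have hhalf : Real.exp ((1/2)*Real.log 5) = Real.sqrt 5 := by
      rw [Real.sqrt_eq_rpow, Real.rpow_def_of_pos (by norm_num : (0:ℝ) < 5)]
      ring_nf
    rw [hhalf, Real.exp_neg]
    norm_num
    ring
  rw [hg, hexp]
  rw [show (2.55:ℝ) * (625*Real.sqrt 5/Real.exp 5) = 2.55*625*Real.sqrt 5/Real.exp 5 by ring,
    le_div_iff₀ (Real.exp_pos 5)]
  have h5 := exp_five_lt
  have hs := sqrt5_gt
  have hvv : (2.7182818286:ℝ)^5 ≤ 148.41316 := by norm_num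
  nlinarith [h5, hs, hvv]


lemma sqrt_pi_exp_half : Real.sqrt π * Real.exp (1/2) ≤ 2.9224 := by
  have hsq : (Real.sqrt π * Real.exp (1/2))^2 = π * Real.exp 1 := by
    rw [mul_pow, Real.sq_sqrt Real.pi_pos.le, ← Real.exp_nat_mul]
    norm_num
  have hub : π * Real.exp 1 ≤ 8.53976 := by
    nlinarith [Real.pi_lt_d6, Real.exp_one_lt_d9, Real.exp_pos 1, Real.pi_pos]
  nlinarith [Real.sqrt_nonneg π, Real.exp_pos (1/2:ℝ), hsq, hub,
    mul_pos (Real.sqrt_pos.mpr Real.pi_pos) (Real.exp_pos (1/2:ℝ)),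
    sq_nonneg (Real.sqrt π * Real.exp (1/2) - 2.9224)]

lemma gamma32 : Real.Gamma (3/2) = (1/2) * Real.sqrt π := by
  rw [show (3/2:ℝ) = 1/2 + 1 by norm_num, Real.Gamma_add_one (by norm_num),
    Real.Gamma_one_half_eq]
lemma gamma52 : Real.Gamma (5/2) = (3/4) * Real.sqrt π := by
  rw [show (5/2:ℝ) = 3/2 + 1 by norm_num, Real.Gamma_add_one (by norm_num), gamma32]; ring
lemma gamma72 : Real.Gamma (7/2) = (15/8) * Real.sqrt π := by
  rw [show (7/2:ℝ) = 5/2 + 1 by norm_num, Real.Gamma_add_one (by norm_num), gamma52]; ring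
lemma gamma92 : Real.Gamma (9/2) = (105/16) * Real.sqrt π := by
  rw [show (9/2:ℝ) = 7/2 + 1 by norm_num, Real.Gamma_add_one (by norm_num), gamma72]; ring
lemma gamma112 : Real.Gamma (11/2) = (945/32) * Real.sqrt π := by
  rw [show (11/2:ℝ) = 9/2 + 1 by norm_num, Real.Gamma_add_one (by norm_num), gamma92]; ring
lemma gamma3 : Real.Gamma 3 = 2 := by
  rw [show (3:ℝ) = ((2:ℕ):ℝ)+1 by norm_num, Real.Gamma_nat_eq_factorial]
  norm_num [Nat.factorial]
lemma gamma4 : Real.Gamma 4 = 6 := by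
  rw [show (4:ℝ) = ((3:ℕ):ℝ)+1 by norm_num, Real.Gamma_nat_eq_factorial]
  norm_num [Nat.factorial]

/-- base case B : Γ(11/2) ≤ 2.55 exp((11/2-1/2) log(11/2) - 11/2) -/
lemma baseB : Real.Gamma (11/2) ≤ 2.55 * Real.exp ((11/2 - 1/2) * Real.log (11/2) - (11/2:ℝ)) := by
  rw [gamma112]
  have hE : Real.exp ((11/2 - 1/2) * Real.log (11/2) - (11/2:ℝ))
      = (161051/32) / (Real.exp 5 * Real.exp (1/2)) := by
    rw [show ((11:ℝ)/2 - 1/2) * Real.log (11/2) - (11/2:ℝ)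
        = (5:ℝ)*Real.log (11/2) - (5 + 1/2) by ring]
    rw [Real.exp_sub, Real.exp_add]
    have hexp5 : Real.exp ((5:ℝ)*Real.log (11/2)) = (161051/32:ℝ) := by
      rw [show (5:ℝ) = ((5:ℕ):ℝ) by norm_num, Real.exp_nat_mul,
        Real.exp_log (by norm_num : (0:ℝ) < 11/2)]
      norm_num
    rw [hexp5]
  rw [hE, mul_div_assoc', le_div_iff₀ (by positivity)]
  have h5 := exp_five_lt
  have hvv : (2.7182818286:ℝ)^5 ≤ 148.41316 := by norm_num
  have hpe := sqrt_pi_exp_half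
  have h5' : Real.exp 5 ≤ 148.41316 := h5.trans hvv
  have hmm : (Real.sqrt π * Real.exp (1/2)) * Real.exp 5 ≤ 2.9224 * 148.41316 :=
    mul_le_mul hpe h5' (Real.exp_pos 5).le (by norm_num)
  nlinarith [hmm, Real.sqrt_nonneg π, Real.exp_pos (1/2:ℝ), Real.exp_pos 5]

lemma lemA : ∀ k : ℕ, Real.Gamma (5 + (k:ℝ)) ≤
    2.55 * Real.exp ((5 + (k:ℝ) - 1/2) * Real.log (5 + (k:ℝ)) - (5 + (k:ℝ))) := by
  intro k
  induction k with
  | zero => simpa using baseA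
  | succ k ih =>
    have e1 : (5:ℝ) + ((k+1:ℕ):ℝ) = (5 + (k:ℝ)) + 1 := by push_cast; ring
    rw [e1, show (5 + (k:ℝ)) + 1 - 1/2 = (5 + (k:ℝ)) + 1/2 by ring]
    exact stirling_step (by have := Nat.cast_nonneg (α := ℝ) k; linarith) ih

lemma lemB : ∀ k : ℕ, Real.Gamma (11/2 + (k:ℝ)) ≤
    2.55 * Real.exp ((11/2 + (k:ℝ) - 1/2) * Real.log (11/2 + (k:ℝ)) - (11/2 + (k:ℝ))) := by
  intro k
  induction k with
  | zero => simpa using baseB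
  | succ k ih =>
    have e1 : (11/2:ℝ) + ((k+1:ℕ):ℝ) = (11/2 + (k:ℝ)) + 1 := by push_cast; ring
    rw [e1, show (11/2 + (k:ℝ)) + 1 - 1/2 = (11/2 + (k:ℝ)) + 1/2 by ring]
    exact stirling_step (by have := Nat.cast_nonneg (α := ℝ) k; linarith) ih

lemma log_two_pi_div : (-4977/5000 : ℝ) ≤ Real.log (2*π/17) := by
  rw [Real.le_log_iff_exp_le (by positivity)]
  have ha := Real.add_one_le_exp (-(23/5000:ℝ))
  have hb : (4977/5000:ℝ) ≤ Real.exp (-(23/5000:ℝ)) := by linarith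
  have hc : Real.exp (23/5000:ℝ) * Real.exp (-(23/5000:ℝ)) = 1 := by
    rw [← Real.exp_add]; norm_num
  have h2 : Real.exp (23/5000:ℝ) ≤ 5000/4977 := by
    nlinarith [Real.exp_pos (23/5000:ℝ), Real.exp_pos (-(23/5000:ℝ))]
  have h1 : Real.exp (-4977/5000 : ℝ) * Real.exp 1 = Real.exp (23/5000:ℝ) := by
    rw [← Real.exp_add]; norm_num
  have h3 : (2.7182818:ℝ) < Real.exp 1 := by linarith [Real.exp_one_gt_d9]
  have hpi := Real.pi_gt_d6
  nlinarith [Real.exp_pos (-4977/5000:ℝ), Real.exp_pos 1]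

lemma mainChain {x : ℝ} (hx : 5 ≤ x) :
    2.55 * Real.exp ((x - 1/2) * Real.log x - x)
      < Real.exp ((x-2) * Real.log (π*(2*x+13)/17)) := by
  have hxpos : (0:ℝ) < x := by linarith
  have hpi := Real.pi_pos
  rw [show (2.55:ℝ) = 51/20 by norm_num,
    ← Real.exp_log (show (0:ℝ) < 51/20 by norm_num), ← Real.exp_add, Real.exp_lt_exp]
  have hfac : π*(2*x+13)/17 = (2*π/17) * x * (1+13/(2*x)) := by
    field_simp
  rw [hfac, Real.log_mul (by positivity) (by positivity),
    Real.log_mul (by positivity) hxpos.ne']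
  have hbeta := log_two_pi_div
  have hp : 26/(4*x+13) ≤ Real.log (1+13/(2*x)) := by
    have h := log_ge_pade (t := 13/(2*x)) (by positivity)
      (by rw [div_le_iff₀ (by positivity)]; linarith)
    have he : 2*(13/(2*x))/(2+13/(2*x)) = 26/(4*x+13) := by
      rw [div_eq_div_iff (by positivity) (by positivity)]
      field_simp
      ring
    rw [he] at h; exact h
  have hpw := piecewise hx
  have hc := log2dot55
  have hx2 : (0:ℝ) ≤ x - 2 := by linarith
  have h1 : (x-2)*(-4977/5000) ≤ (x-2)*Real.log (2*π/17) :=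
    mul_le_mul_of_nonneg_left hbeta hx2
  have h2 : (x-2)*(26/(4*x+13)) ≤ (x-2)*Real.log (1+13/(2*x)) :=
    mul_le_mul_of_nonneg_left hp hx2
  have h3 : (x-2)*(26/(4*x+13)) = 26*(x-2)/(4*x+13) := by ring
  have h4 : (x-2)*(Real.log (2*π/17) + Real.log x + Real.log (1+13/(2*x)))
      = (x-2)*Real.log (2*π/17) + (x-2)*Real.log x + (x-2)*Real.log (1+13/(2*x)) := by ring
  have h5 : (x-2)*Real.log x = x*Real.log x - 2*Real.log x := by ring
  have h6 : (x-1/2)*Real.log x = x*Real.log x - (1/2)*Real.log x := by ring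
  rw [h4]
  linarith [hpw, h1, h2, hc, h3, h5, h6]

lemma finishLemma (n : ℕ) (hn : 1 ≤ n)
    (hsq : Real.Gamma (2 + (n:ℝ)/2)^2 < (π*((n:ℝ)+17)/17)^n) :
    2 / π * Real.Gamma (2 + (n:ℝ)/2) ^ ((2:ℝ)/n) < (n:ℝ)/8.5 + 2 := by
  have hn0 : (0:ℝ) < (n:ℝ) := by exact_mod_cast hn
  have hb : (0:ℝ) < π*((n:ℝ)+17)/17 := by positivity
  have hΓpos : 0 < Real.Gamma (2 + (n:ℝ)/2) := Real.Gamma_pos_of_pos (by positivity)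
  have hkey : Real.Gamma (2 + (n:ℝ)/2) ^ ((2:ℝ)/n) < π*((n:ℝ)+17)/17 := by
    refine lt_of_pow_lt_pow_left₀ n hb.le ?_
    have h1 : (Real.Gamma (2 + (n:ℝ)/2) ^ ((2:ℝ)/(n:ℝ)))^n = Real.Gamma (2 + (n:ℝ)/2)^2 := by
      rw [← Real.rpow_natCast (Real.Gamma (2 + (n:ℝ)/2) ^ ((2:ℝ)/(n:ℝ))) n,
        ← Real.rpow_mul hΓpos.le,
        show ((2:ℝ)/(n:ℝ))*(n:ℝ) = ((2:ℕ):ℝ) by push_cast; field_simp,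
        Real.rpow_natCast]
    rw [h1]; exact hsq
  have h2π : (0:ℝ) < 2/π := by positivity
  calc 2/π * Real.Gamma (2 + (n:ℝ)/2) ^ ((2:ℝ)/n)
      < 2/π * (π*((n:ℝ)+17)/17) := mul_lt_mul_of_pos_left hkey h2π
    _ = (n:ℝ)/8.5 + 2 := by
        have hπ : π ≠ 0 := Real.pi_ne_zero
        field_simp
        ring

theorem hermite_linear_bound (γ : ℕ → ℝ)
    (hblich : ∀ n : ℕ, 1 ≤ n →
      γ n ≤ 2 / Real.pi * Real.Gamma (2 + (n : ℝ) / 2) ^ ((2 : ℝ) / n)) :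
    ∀ n : ℕ, 1 ≤ n → γ n < (n : ℝ) / 8.5 + 2 := by
  intro n hn
  have key := hblich n hn
  have hmain : 2 / Real.pi * Real.Gamma (2 + (n : ℝ) / 2) ^ ((2 : ℝ) / n) < (n : ℝ) / 8.5 + 2 := by
    apply finishLemma n hn
    rcases lt_or_ge n 6 with h6 | h6
    · interval_cases n
      · -- n = 1
        rw [show (2:ℝ) + ((1:ℕ):ℝ)/2 = 5/2 by norm_num, gamma52,
          mul_pow, Real.sq_sqrt Real.pi_pos.le]
        have hpi := Real.pi_gt_d6
        norm_num
        nlinarith [Real.pi_pos]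
      · -- n = 2
        rw [show (2:ℝ) + ((2:ℕ):ℝ)/2 = 3 by norm_num, gamma3]
        have hpi := Real.pi_gt_d6
        nlinarith [Real.pi_pos, sq_nonneg (π - 3.141592)]
      · -- n = 3
        rw [show (2:ℝ) + ((3:ℕ):ℝ)/2 = 7/2 by norm_num, gamma72,
          mul_pow, Real.sq_sqrt Real.pi_pos.le]
        have hpi := Real.pi_gt_d6
        nlinarith [Real.pi_pos, sq_nonneg (π - 3.141592), mul_pos Real.pi_pos Real.pi_pos]
      · -- n = 4
        rw [show (2:ℝ) + ((4:ℕ):ℝ)/2 = 4 by norm_num, gamma4]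
        have hpi := Real.pi_gt_d6
        have hsq : (9.8:ℝ) ≤ π^2 := by nlinarith
        nlinarith [hsq, sq_nonneg (π^2 - 9.8), Real.pi_pos]
      · -- n = 5
        rw [show (2:ℝ) + ((5:ℕ):ℝ)/2 = 9/2 by norm_num, gamma92,
          mul_pow, Real.sq_sqrt Real.pi_pos.le]
        have hpi := Real.pi_gt_d6
        have hsq : (9.8:ℝ) ≤ π^2 := by nlinarith
        nlinarith [hsq, sq_nonneg (π^2 - 9.8), Real.pi_pos]
    · -- n ≥ 6
      have hx : (5:ℝ) ≤ 2 + (n:ℝ)/2 := by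
        have h6' : (6:ℝ) ≤ (n:ℝ) := by exact_mod_cast h6
        linarith
      have hΓle : Real.Gamma (2 + (n:ℝ)/2) ≤
          2.55 * Real.exp ((2 + (n:ℝ)/2 - 1/2) * Real.log (2 + (n:ℝ)/2) - (2 + (n:ℝ)/2)) := by
        rcases Nat.even_or_odd n with ⟨m, hm⟩ | ⟨m, hm⟩
        · have hm3 : 3 ≤ m := by omega
          have hc : (2:ℝ) + (n:ℝ)/2 = 5 + ((m - 3 : ℕ):ℝ) := by
            subst hm; push_cast [Nat.cast_sub hm3]; ring
          rw [hc]; exact lemA (m-3)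
        · have hm3 : 3 ≤ m := by omega
          have hc : (2:ℝ) + (n:ℝ)/2 = 11/2 + ((m - 3 : ℕ):ℝ) := by
            subst hm; push_cast [Nat.cast_sub hm3]; ring
          rw [hc]; exact lemB (m-3)
      have hch := mainChain hx
      have hΓpos : 0 < Real.Gamma (2 + (n:ℝ)/2) := Real.Gamma_pos_of_pos (by positivity)
      have hlt : Real.Gamma (2 + (n:ℝ)/2)
          < Real.exp ((2 + (n:ℝ)/2 - 2) * Real.log (π*(2*(2 + (n:ℝ)/2)+13)/17)) :=
        lt_of_le_of_lt hΓle hch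
      have hb : (0:ℝ) < π*((n:ℝ)+17)/17 := by positivity
      have hbb : π*(2*(2 + (n:ℝ)/2)+13)/17 = π*((n:ℝ)+17)/17 := by ring
      rw [hbb] at hlt
      have h2 : Real.Gamma (2 + (n:ℝ)/2)^2
          < (Real.exp ((2 + (n:ℝ)/2 - 2) * Real.log (π*((n:ℝ)+17)/17)))^2 :=
        pow_lt_pow_left₀ hlt hΓpos.le two_ne_zero
      have h3 : (Real.exp ((2 + (n:ℝ)/2 - 2) * Real.log (π*((n:ℝ)+17)/17)))^2
          = (π*((n:ℝ)+17)/17)^n := by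
        rw [← Real.exp_nat_mul]
        rw [show ((2:ℕ):ℝ) * ((2 + (n:ℝ)/2 - 2) * Real.log (π*((n:ℝ)+17)/17))
            = ((n:ℕ):ℝ) * Real.log (π*((n:ℝ)+17)/17) by push_cast; ring]
        rw [Real.exp_nat_mul, Real.exp_log hb]
      rw [h3] at h2
      exact h2
  linarith
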